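/- Let X1, X2, X3 be mutually independent random variables on a common probability space taking values in finite sets, each with entropy a. Let Y11, Y12, Y21, Y22 be finite-valued random variables with H(Y12) ≤ a and H(Y22) ≤ a, such that Y12 is a deterministic function of (Y11, X3). If H((X1, X2) | (Y12, Y22)) ≤ ε for some ε ≥ 0, then H((Y11, Y21, Y22) | X3) ≥ 2a − 2ε. -/

import Mathlib

open scoped BigOperators

/-- The probability that the random variable `X` (on finite sample space `Ω`
with probability mass function `μ`) takes the value `a`. -/
noncomputable def probOf {Ω : Type} [Fintype Ω] {α : Type} [DecidableEq α]
    (μ : Ω → ℝ) (X : Ω → α) (a : α) : ℝ :=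
  ∑ ω : Ω, if X ω = a then μ ω else 0

/-- Shannon entropy (natural-log base) of a finite-valued random variable. -/
noncomputable def entropy {Ω : Type} [Fintype Ω] {α : Type} [Fintype α] [DecidableEq α]
    (μ : Ω → ℝ) (X : Ω → α) : ℝ :=
  ∑ a : α, -(probOf μ X a * Real.log (probOf μ X a))

/-- Conditional entropy `H(X | Y) = H(X, Y) - H(Y)`. -/
noncomputable def condEntropy {Ω : Type} [Fintype Ω] {α β : Type}
    [Fintype α] [DecidableEq α] [Fintype β] [DecidableEq β]
    (μ : Ω → ℝ) (X : Ω → α) (Y : Ω → β) : ℝ :=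
  entropy μ (fun ω => (X ω, Y ω)) - entropy μ Y

/-- `μ` is a probability mass function on the finite sample space `Ω`. -/
def IsPMF {Ω : Type} [Fintype Ω] (μ : Ω → ℝ) : Prop :=
  (∀ ω, 0 ≤ μ ω) ∧ ∑ ω : Ω, μ ω = 1

/-- Independence of two finite-valued random variables: the joint distribution
factorizes. -/
def IndepRV {Ω : Type} [Fintype Ω] {α β : Type} [DecidableEq α] [DecidableEq β]
    (μ : Ω → ℝ) (X : Ω → α) (Y : Ω → β) : Prop :=
  ∀ a b, probOf μ (fun ω => (X ω, Y ω)) (a, b) = probOf μ X a * probOf μ Y b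

/-- Mutual independence of three finite-valued random variables: the joint
distribution factorizes. -/
def MutIndep3 {Ω : Type} [Fintype Ω] {α β γ : Type}
    [DecidableEq α] [DecidableEq β] [DecidableEq γ]
    (μ : Ω → ℝ) (X : Ω → α) (Y : Ω → β) (Z : Ω → γ) : Prop :=
  ∀ a b c, probOf μ (fun ω => (X ω, Y ω, Z ω)) (a, b, c) =
    probOf μ X a * probOf μ Y b * probOf μ Z c

section myhelpers
variable {Ω : Type} [Fintype Ω] {μ : Ω → ℝ}

lemma probOf_nonneg {α : Type} [DecidableEq α] (h : ∀ ω, 0 ≤ μ ω) (X : Ω → α) (a : α) :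
    0 ≤ probOf μ X a :=
  Finset.sum_nonneg fun ω _ => by split <;> simp [h ω]

lemma sum_probOf {α : Type} [Fintype α] [DecidableEq α] (h : ∑ ω : Ω, μ ω = 1)
    (X : Ω → α) : ∑ a : α, probOf μ X a = 1 := by
  unfold probOf
  rw [Finset.sum_comm]
  simpa [Finset.sum_ite_eq] using h

lemma probOf_congr {α β : Type} [DecidableEq α] [DecidableEq β]
    {X : Ω → α} {Y : Ω → β} {a : α} {b : β} (h : ∀ ω, X ω = a ↔ Y ω = b) :
    probOf μ X a = probOf μ Y b :=
  Finset.sum_congr rfl fun ω _ => by simp only [h ω]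

lemma probOf_fst_marg {α β : Type} [Fintype β] [DecidableEq α] [DecidableEq β]
    (X : Ω → α) (Y : Ω → β) (a : α) :
    probOf μ X a = ∑ b : β, probOf μ (fun ω => (X ω, Y ω)) (a, b) := by
  unfold probOf
  rw [Finset.sum_comm]
  refine Finset.sum_congr rfl fun ω _ => ?_
  rcases eq_or_ne (X ω) a with h | h <;>
    simp [h, Prod.ext_iff, Finset.sum_ite_eq]

lemma probOf_snd_marg {α β : Type} [Fintype α] [DecidableEq α] [DecidableEq β]
    (X : Ω → α) (Y : Ω → β) (b : β) :
    probOf μ Y b = ∑ a : α, probOf μ (fun ω => (X ω, Y ω)) (a, b) := by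
  unfold probOf
  rw [Finset.sum_comm]
  refine Finset.sum_congr rfl fun ω _ => ?_
  rcases eq_or_ne (Y ω) b with h | h <;>
    simp [h, Prod.ext_iff, Finset.sum_ite_eq]

lemma probOf_comp {α β : Type} [Fintype α] [DecidableEq α] [DecidableEq β]
    (f : α → β) (X : Ω → α) (b : β) :
    probOf μ (fun ω => f (X ω)) b = ∑ a : α, if f a = b then probOf μ X a else 0 := by
  unfold probOf
  have : (∑ a : α, if f a = b then ∑ ω : Ω, if X ω = a then μ ω else 0 else 0)
      = ∑ ω : Ω, ∑ a : α, if X ω = a then (if f a = b then μ ω else 0) else 0 := by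
    rw [Finset.sum_comm]
    refine Finset.sum_congr rfl fun a _ => ?_
    split <;> simp
  rw [this]
  refine Finset.sum_congr rfl fun ω _ => ?_
  rw [Finset.sum_ite_eq]
  simp

lemma neg_mul_log_mono {p q : ℝ} (hp : 0 ≤ p) (hpq : p ≤ q) :
    -(p * Real.log q) ≤ -(p * Real.log p) := by
  rcases eq_or_lt_of_le hp with h | h
  · simp [← h]
  · have := Real.log_le_log h hpq
    nlinarith

lemma entropy_comp_le {α β : Type} [Fintype α] [DecidableEq α] [Fintype β] [DecidableEq β]
    (hnn : ∀ ω, 0 ≤ μ ω) (f : α → β) (X : Ω → α) :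
    entropy μ (fun ω => f (X ω)) ≤ entropy μ X := by
  unfold entropy
  set p := probOf μ X with hp
  have hq : ∀ b, probOf μ (fun ω => f (X ω)) b = ∑ a : α, if f a = b then p a else 0 :=
    fun b => probOf_comp f X b
  have hpnn : ∀ a, 0 ≤ p a := fun a => probOf_nonneg hnn X a
  have hsplit : (∑ a : α, -(p a * Real.log (p a)))
      = ∑ b : β, ∑ a : α, if f a = b then -(p a * Real.log (p a)) else 0 := by
    rw [Finset.sum_comm]
    refine Finset.sum_congr rfl fun a _ => ?_
    rw [Finset.sum_ite_eq]
    simp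
  rw [hsplit]
  refine Finset.sum_le_sum fun b _ => ?_
  rw [hq b]
  set q := ∑ a : α, if f a = b then p a else 0 with hqdef
  have hqnn : 0 ≤ q := Finset.sum_nonneg fun a _ => by split <;> simp [hpnn]
  have hle : ∀ a, f a = b → p a ≤ q := by
    intro a ha
    have := Finset.single_le_sum (f := fun a => if f a = b then p a else 0)
      (fun a _ => by split <;> simp [hpnn]) (Finset.mem_univ a)
    simpa [ha] using this
  calc -(q * Real.log q) = ∑ a : α, if f a = b then -(p a * Real.log q) else 0 := by
        rw [show (∑ a : α, if f a = b then -(p a * Real.log q) else 0)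
            = ∑ a : α, (if f a = b then p a else 0) * (-(Real.log q)) from
          Finset.sum_congr rfl fun a _ => by split <;> ring]
        rw [← Finset.sum_mul, ← hqdef]; ring
    _ ≤ ∑ a : α, if f a = b then -(p a * Real.log (p a)) else 0 := by
        refine Finset.sum_le_sum fun a _ => ?_
        split
        · exact neg_mul_log_mono (hpnn a) (hle a ‹_›)
        · exact le_refl 0

lemma neg_mul_log_mul (x y : ℝ) :
    -(x * y * Real.log (x * y)) = y * -(x * Real.log x) + x * -(y * Real.log y) := by
  rcases eq_or_ne x 0 with hx | hx
  · simp [hx]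
  rcases eq_or_ne y 0 with hy | hy
  · simp [hy]
  rw [Real.log_mul hx hy]; ring

lemma entropy_pair_of_indep {α β : Type} [Fintype α] [DecidableEq α] [Fintype β] [DecidableEq β]
    (h1 : ∑ ω : Ω, μ ω = 1) {X : Ω → α} {Y : Ω → β}
    (h : ∀ a b, probOf μ (fun ω => (X ω, Y ω)) (a, b) = probOf μ X a * probOf μ Y b) :
    entropy μ (fun ω => (X ω, Y ω)) = entropy μ X + entropy μ Y := by
  unfold entropy
  rw [Fintype.sum_prod_type]
  have key : ∀ a : α, (∑ b : β, -(probOf μ (fun ω => (X ω, Y ω)) (a, b) *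
      Real.log (probOf μ (fun ω => (X ω, Y ω)) (a, b))))
      = (∑ b : β, probOf μ Y b) * -(probOf μ X a * Real.log (probOf μ X a))
        + probOf μ X a * ∑ b : β, -(probOf μ Y b * Real.log (probOf μ Y b)) := by
    intro a
    rw [Finset.sum_mul, Finset.mul_sum, ← Finset.sum_add_distrib]
    exact Finset.sum_congr rfl fun b _ => by rw [h a b, neg_mul_log_mul]
  calc (∑ a : α, ∑ b : β, -(probOf μ (fun ω => (X ω, Y ω)) (a, b) *
          Real.log (probOf μ (fun ω => (X ω, Y ω)) (a, b))))
      = ∑ a : α, ((∑ b : β, probOf μ Y b) * -(probOf μ X a * Real.log (probOf μ X a))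
        + probOf μ X a * ∑ b : β, -(probOf μ Y b * Real.log (probOf μ Y b))) :=
        Finset.sum_congr rfl fun a _ => key a
    _ = _ := by
        rw [Finset.sum_add_distrib, ← Finset.sum_mul, sum_probOf h1 X, sum_probOf h1 Y]
        simp

end myhelpers
lemma sum3_le {β α γ : Type} [Fintype β] [Fintype α] [Fintype γ] {f g : β → α → γ → ℝ}
    (h : ∀ b a c, f b a c ≤ g b a c) :
    ∑ b, ∑ a, ∑ c, f b a c ≤ ∑ b, ∑ a, ∑ c, g b a c :=
  Finset.sum_le_sum fun b _ => Finset.sum_le_sum fun a _ =>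
    Finset.sum_le_sum fun c _ => h b a c

lemma gibbs3 {α β γ : Type} [Fintype α] [Fintype β] [Fintype γ]
    (F : α → β → γ → ℝ) (q : β → γ → ℝ) (r : α → β → ℝ) (s : β → ℝ)
    (hq : ∀ b c, q b c = ∑ a, F a b c) (hr : ∀ a b, r a b = ∑ c, F a b c)
    (hs : ∀ b, s b = ∑ a, ∑ c, F a b c)
    (hnn : ∀ a b c, 0 ≤ F a b c) (hsum : ∑ a, ∑ b, ∑ c, F a b c = 1) :
    (∑ a, ∑ b, ∑ c, -(F a b c * Real.log (F a b c))) + ∑ b, -(s b * Real.log (s b))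
      ≤ (∑ a, ∑ b, -(r a b * Real.log (r a b)))
        + ∑ b, ∑ c, -(q b c * Real.log (q b c)) := by
  have hqnn : ∀ b c, 0 ≤ q b c := fun b c => (hq b c) ▸
    Finset.sum_nonneg fun a _ => hnn a b c
  have hrnn : ∀ a b, 0 ≤ r a b := fun a b => (hr a b) ▸
    Finset.sum_nonneg fun c _ => hnn a b c
  have hsnn : ∀ b, 0 ≤ s b := fun b => (hs b) ▸
    Finset.sum_nonneg fun a _ => Finset.sum_nonneg fun c _ => hnn a b c
  have hFq : ∀ a b c, F a b c ≤ q b c := fun a b c => (hq b c) ▸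
    Finset.single_le_sum (fun a' _ => hnn a' b c) (Finset.mem_univ a)
  have hFr : ∀ a b c, F a b c ≤ r a b := fun a b c => (hr a b) ▸
    Finset.single_le_sum (fun c' _ => hnn a b c') (Finset.mem_univ c)
  have hrs : ∀ a b, r a b ≤ s b := by
    intro a b
    rw [hs b]
    have := Finset.single_le_sum (f := fun a' => ∑ c, F a' b c)
      (fun a' _ => Finset.sum_nonneg fun c _ => hnn a' b c) (Finset.mem_univ a)
    rw [hr]
    exact this
  have hFs : ∀ a b c, F a b c ≤ s b := fun a b c => (hFr a b c).trans (hrs a b)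
  -- rewrite the four entropy-style sums as triple sums in order b, a, c
  have eS : ∑ b, -(s b * Real.log (s b))
      = ∑ b, ∑ a, ∑ c, F a b c * (-Real.log (s b)) := by
    refine Finset.sum_congr rfl fun b _ => ?_
    rw [show (∑ a, ∑ c, F a b c * -Real.log (s b))
        = (∑ a, ∑ c, F a b c) * -Real.log (s b) from by
      rw [Finset.sum_mul]
      exact Finset.sum_congr rfl fun a _ => by rw [Finset.sum_mul]]
    rw [← hs b]; ring
  have eR : ∑ a, ∑ b, -(r a b * Real.log (r a b))
      = ∑ b, ∑ a, ∑ c, F a b c * (-Real.log (r a b)) := by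
    rw [Finset.sum_comm]
    refine Finset.sum_congr rfl fun b _ => Finset.sum_congr rfl fun a _ => ?_
    rw [show (∑ c, F a b c * -Real.log (r a b))
        = (∑ c, F a b c) * -Real.log (r a b) from by rw [Finset.sum_mul]]
    rw [← hr a b]; ring
  have eQ : ∑ b, ∑ c, -(q b c * Real.log (q b c))
      = ∑ b, ∑ a, ∑ c, F a b c * (-Real.log (q b c)) := by
    refine Finset.sum_congr rfl fun b _ => ?_
    rw [Finset.sum_comm]
    refine Finset.sum_congr rfl fun c _ => ?_
    rw [show (∑ a, F a b c * -Real.log (q b c))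
        = (∑ a, F a b c) * -Real.log (q b c) from by rw [Finset.sum_mul]]
    rw [← hq b c]; ring
  have eF : ∑ a, ∑ b, ∑ c, -(F a b c * Real.log (F a b c))
      = ∑ b, ∑ a, ∑ c, -(F a b c * Real.log (F a b c)) := Finset.sum_comm ..
  rw [eS, eR, eQ, eF, ← Finset.sum_add_distrib, ← Finset.sum_add_distrib]
  have merge : ∀ (f g : β → α → γ → ℝ),
      (∑ b, ((∑ a, ∑ c, f b a c) + ∑ a, ∑ c, g b a c))
      = ∑ b, ∑ a, ∑ c, (f b a c + g b a c) := by
    intro f g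
    refine Finset.sum_congr rfl fun b _ => ?_
    rw [← Finset.sum_add_distrib]
    exact Finset.sum_congr rfl fun a _ => (Finset.sum_add_distrib).symm
  rw [merge (fun b a c => -(F a b c * Real.log (F a b c)))
        (fun b a c => F a b c * -Real.log (s b)),
      merge (fun b a c => F a b c * -Real.log (r a b))
        (fun b a c => F a b c * -Real.log (q b c))]
  -- now a single triple sum inequality
  have pointwise : ∀ b a c,
      F a b c - r a b * q b c / s b
        ≤ (F a b c * -Real.log (r a b) + F a b c * -Real.log (q b c))
          - (-(F a b c * Real.log (F a b c)) + F a b c * -Real.log (s b)) := by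
    intro b a c
    rcases eq_or_lt_of_le (hnn a b c) with hF | hF
    · have : 0 ≤ r a b * q b c / s b :=
        div_nonneg (mul_nonneg (hrnn a b) (hqnn b c)) (hsnn b)
      simp [← hF]
      linarith
    · have hr' : 0 < r a b := lt_of_lt_of_le hF (hFr a b c)
      have hq' : 0 < q b c := lt_of_lt_of_le hF (hFq a b c)
      have hs' : 0 < s b := lt_of_lt_of_le hF (hFs a b c)
      have hx : 0 < r a b * q b c / (F a b c * s b) := by positivity
      have hlog := Real.log_le_sub_one_of_pos hx
      have hexp : Real.log (r a b * q b c / (F a b c * s b))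
          = Real.log (r a b) + Real.log (q b c) - Real.log (F a b c) - Real.log (s b) := by
        rw [Real.log_div (by positivity) (by positivity),
            Real.log_mul (ne_of_gt hr') (ne_of_gt hq'),
            Real.log_mul (ne_of_gt hF) (ne_of_gt hs')]
        ring
      rw [hexp] at hlog
      have h1 : F a b c * (Real.log (r a b) + Real.log (q b c)
            - Real.log (F a b c) - Real.log (s b))
          ≤ F a b c * (r a b * q b c / (F a b c * s b) - 1) :=
        mul_le_mul_of_nonneg_left hlog (le_of_lt hF)
      have h2 : F a b c * (r a b * q b c / (F a b c * s b) - 1)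
          = r a b * q b c / s b - F a b c := by
        field_simp
      rw [h2] at h1
      nlinarith [h1]
  have lower : (1 : ℝ) - ∑ b, ∑ a, ∑ c, r a b * q b c / s b
      ≤ ∑ b, ∑ a, ∑ c, ((F a b c * -Real.log (r a b) + F a b c * -Real.log (q b c))
          - (-(F a b c * Real.log (F a b c)) + F a b c * -Real.log (s b))) := by
    have e1 : ∑ b, ∑ a, ∑ c, (F a b c - r a b * q b c / s b)
        = (∑ b, ∑ a, ∑ c, F a b c) - ∑ b, ∑ a, ∑ c, r a b * q b c / s b := by
      simp [Finset.sum_sub_distrib]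
    have e2 : ∑ b, ∑ a, ∑ c, F a b c = 1 := by rw [Finset.sum_comm]; exact hsum
    have := sum3_le (f := fun b a c => F a b c - r a b * q b c / s b) pointwise
    rw [e1, e2] at this
    exact this
  have upper : ∑ b, ∑ a, ∑ c, r a b * q b c / s b ≤ 1 := by
    have perb : ∀ b, ∑ a, ∑ c, r a b * q b c / s b ≤ s b := by
      intro b
      have e3 : ∑ a, ∑ c, r a b * q b c / s b
          = (∑ a, r a b) * (∑ c, q b c) / s b := by
        rw [show ((∑ a, r a b) * (∑ c, q b c) / s b)
            = ∑ a, (r a b * ((∑ c, q b c) / s b)) from by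
          rw [← Finset.sum_mul]; ring]
        refine Finset.sum_congr rfl fun a _ => ?_
        rw [show (r a b * ((∑ c, q b c) / s b)) = ∑ c, (q b c * (r a b / s b)) from by
          rw [← Finset.sum_mul]; ring]
        exact Finset.sum_congr rfl fun c _ => by ring
      have e4 : ∑ a, r a b = s b := by
        rw [hs b]; exact Finset.sum_congr rfl fun a _ => hr a b
      have e5 : ∑ c, q b c = s b := by
        rw [hs b, Finset.sum_comm]
        exact Finset.sum_congr rfl fun c _ => hq b c
      rw [e3, e4, e5]
      rcases eq_or_ne (s b) 0 with h | h
      · simp [h]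
      · rw [mul_div_assoc, div_self h, mul_one]
    calc ∑ b, ∑ a, ∑ c, r a b * q b c / s b ≤ ∑ b, s b :=
          Finset.sum_le_sum fun b _ => perb b
      _ = 1 := by
          rw [show (∑ b, s b) = ∑ b, ∑ a, ∑ c, F a b c from
            Finset.sum_congr rfl fun b _ => hs b, Finset.sum_comm]
          exact hsum
  have := le_trans (by linarith : (0:ℝ) ≤ 1 - ∑ b, ∑ a, ∑ c, r a b * q b c / s b) lower
  have esub : ∑ b, ∑ a, ∑ c, ((F a b c * -Real.log (r a b) + F a b c * -Real.log (q b c))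
          - (-(F a b c * Real.log (F a b c)) + F a b c * -Real.log (s b)))
      = (∑ b, ∑ a, ∑ c, (F a b c * -Real.log (r a b) + F a b c * -Real.log (q b c)))
        - ∑ b, ∑ a, ∑ c, (-(F a b c * Real.log (F a b c)) + F a b c * -Real.log (s b)) := by
    simp [Finset.sum_sub_distrib]
  rw [esub] at this
  linarith
lemma condEntropy_cond_pair_le {Ω α β γ : Type} [Fintype Ω] [Fintype α] [DecidableEq α]
    [Fintype β] [DecidableEq β] [Fintype γ] [DecidableEq γ]
    {μ : Ω → ℝ} (hnn : ∀ ω, 0 ≤ μ ω) (h1 : ∑ ω : Ω, μ ω = 1)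
    (U : Ω → α) (W : Ω → β) (Z : Ω → γ) :
    condEntropy μ U (fun ω => (W ω, Z ω)) ≤ condEntropy μ U W := by
  classical
  have hq : ∀ b c, probOf μ (fun ω => (W ω, Z ω)) (b, c)
      = ∑ a, probOf μ (fun ω => (U ω, W ω, Z ω)) (a, b, c) := fun b c =>
    probOf_snd_marg U (fun ω => (W ω, Z ω)) (b, c)
  have hr : ∀ a b, probOf μ (fun ω => (U ω, W ω)) (a, b)
      = ∑ c, probOf μ (fun ω => (U ω, W ω, Z ω)) (a, b, c) := by
    intro a b
    rw [probOf_fst_marg (fun ω => (U ω, W ω)) Z (a, b)]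
    exact Finset.sum_congr rfl fun c _ =>
      probOf_congr fun ω => by simp [Prod.ext_iff, and_assoc]
  have hs : ∀ b, probOf μ W b
      = ∑ a, ∑ c, probOf μ (fun ω => (U ω, W ω, Z ω)) (a, b, c) := by
    intro b
    rw [probOf_snd_marg U W b]
    exact Finset.sum_congr rfl fun a _ => hr a b
  have hnnF : ∀ (a : α) (b : β) (c : γ),
      0 ≤ probOf μ (fun ω => (U ω, W ω, Z ω)) (a, b, c) := fun a b c =>
    probOf_nonneg hnn _ _
  have hsum : ∑ a, ∑ b, ∑ c, probOf μ (fun ω => (U ω, W ω, Z ω)) (a, b, c) = 1 := by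
    have := sum_probOf h1 (fun ω => (U ω, W ω, Z ω))
    simp only [Fintype.sum_prod_type] at this
    exact this
  have key := gibbs3 (fun a b c => probOf μ (fun ω => (U ω, W ω, Z ω)) (a, b, c))
    (fun b c => probOf μ (fun ω => (W ω, Z ω)) (b, c))
    (fun a b => probOf μ (fun ω => (U ω, W ω)) (a, b)) (probOf μ W) hq hr hs hnnF hsum
  show entropy μ (fun ω => (U ω, W ω, Z ω)) - entropy μ (fun ω => (W ω, Z ω))
      ≤ entropy μ (fun ω => (U ω, W ω)) - entropy μ W
  have eUWZ : entropy μ (fun ω => (U ω, W ω, Z ω))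
      = ∑ a, ∑ b, ∑ c, -(probOf μ (fun ω => (U ω, W ω, Z ω)) (a, b, c) *
          Real.log (probOf μ (fun ω => (U ω, W ω, Z ω)) (a, b, c))) := by
    simp only [entropy, Fintype.sum_prod_type]
  have eWZ : entropy μ (fun ω => (W ω, Z ω))
      = ∑ b, ∑ c, -(probOf μ (fun ω => (W ω, Z ω)) (b, c) *
          Real.log (probOf μ (fun ω => (W ω, Z ω)) (b, c))) := by
    simp only [entropy, Fintype.sum_prod_type]
  have eUW : entropy μ (fun ω => (U ω, W ω))
      = ∑ a, ∑ b, -(probOf μ (fun ω => (U ω, W ω)) (a, b) *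
          Real.log (probOf μ (fun ω => (U ω, W ω)) (a, b))) := by
    simp only [entropy, Fintype.sum_prod_type]
  have eW : entropy μ W = ∑ b, -(probOf μ W b * Real.log (probOf μ W b)) := rfl
  rw [eUWZ, eWZ, eUW, eW]
  linarith

/-- With `X1, X2, X3` mutually independent of entropy `a` each,
`H(Y12) ≤ a`, `H(Y22) ≤ a`, `Y12` a deterministic function of `(Y11, X3)`, and
`H((X1,X2) | (Y12,Y22)) ≤ ε` with `ε ≥ 0`, we have
`H((Y11, Y21, Y22) | X3) ≥ 2a - 2ε`. -/
theorem stmt4 {Ω α₁ α₂ α₃ β₁₁ β₁₂ β₂₁ β₂₂ : Type} [Fintype Ω]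
    [Fintype α₁] [DecidableEq α₁] [Fintype α₂] [DecidableEq α₂]
    [Fintype α₃] [DecidableEq α₃]
    [Fintype β₁₁] [DecidableEq β₁₁] [Fintype β₁₂] [DecidableEq β₁₂]
    [Fintype β₂₁] [DecidableEq β₂₁] [Fintype β₂₂] [DecidableEq β₂₂]
    (μ : Ω → ℝ) (hμ : IsPMF μ)
    (X1 : Ω → α₁) (X2 : Ω → α₂) (X3 : Ω → α₃)
    (Y11 : Ω → β₁₁) (Y12 : Ω → β₁₂) (Y21 : Ω → β₂₁) (Y22 : Ω → β₂₂)
    (a ε : ℝ) (hε : 0 ≤ ε)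
    (hindep : MutIndep3 μ X1 X2 X3)
    (hX1 : entropy μ X1 = a) (hX2 : entropy μ X2 = a) (hX3 : entropy μ X3 = a)
    (hY12 : entropy μ Y12 ≤ a) (hY22 : entropy μ Y22 ≤ a)
    (hf12 : ∃ f : β₁₁ × α₃ → β₁₂, ∀ ω, Y12 ω = f (Y11 ω, X3 ω))
    (hcond : condEntropy μ (fun ω => (X1 ω, X2 ω)) (fun ω => (Y12 ω, Y22 ω)) ≤ ε) :
    2 * a - 2 * ε ≤ condEntropy μ (fun ω => (Y11 ω, Y21 ω, Y22 ω)) X3 := by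
  obtain ⟨hnn, h1⟩ := hμ
  obtain ⟨g, hg⟩ := hf12
  have pX3sum : ∑ c, probOf μ X3 c = 1 := sum_probOf h1 X3
  have hjoint : ∀ (p : α₁ × α₂) (c : α₃),
      probOf μ (fun ω => ((X1 ω, X2 ω), X3 ω)) (p, c)
        = probOf μ X1 p.1 * probOf μ X2 p.2 * probOf μ X3 c := by
    rintro ⟨a, b⟩ c
    rw [show probOf μ (fun ω => ((X1 ω, X2 ω), X3 ω)) ((a, b), c)
        = probOf μ (fun ω => (X1 ω, X2 ω, X3 ω)) (a, b, c) from
      probOf_congr fun ω => by simp [Prod.ext_iff, and_assoc]]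
    exact hindep a b c
  have hmarg12 : ∀ a b, probOf μ (fun ω => (X1 ω, X2 ω)) (a, b)
      = probOf μ X1 a * probOf μ X2 b := by
    intro a b
    rw [probOf_fst_marg (fun ω => (X1 ω, X2 ω)) X3 (a, b)]
    calc ∑ c, probOf μ (fun ω => ((X1 ω, X2 ω), X3 ω)) ((a, b), c)
        = ∑ c, probOf μ X1 a * probOf μ X2 b * probOf μ X3 c :=
          Finset.sum_congr rfl fun c _ => hjoint (a, b) c
      _ = probOf μ X1 a * probOf μ X2 b := by
          rw [← Finset.mul_sum, pX3sum, mul_one]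
  have E123 : entropy μ (fun ω => ((X1 ω, X2 ω), X3 ω))
      = entropy μ (fun ω => (X1 ω, X2 ω)) + entropy μ X3 := by
    refine entropy_pair_of_indep h1 fun p c => ?_
    rw [hjoint p c]
    obtain ⟨a, b⟩ := p
    rw [hmarg12 a b]
  have E12 : entropy μ (fun ω => (X1 ω, X2 ω)) = entropy μ X1 + entropy μ X2 :=
    entropy_pair_of_indep h1 hmarg12
  have step1 : entropy μ (fun ω => ((Y12 ω, Y22 ω), X3 ω))
      ≤ entropy μ (fun ω => ((Y11 ω, Y21 ω, Y22 ω), X3 ω)) := by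
    have ef : (fun ω => ((Y12 ω, Y22 ω), X3 ω))
        = fun ω => ((g (Y11 ω, X3 ω), Y22 ω), X3 ω) := funext fun ω => by rw [hg ω]
    rw [ef]
    exact entropy_comp_le hnn
      (fun t : (β₁₁ × β₂₁ × β₂₂) × α₃ => ((g (t.1.1, t.2), t.1.2.2), t.2))
      (fun ω => ((Y11 ω, Y21 ω, Y22 ω), X3 ω))
  have step2 : condEntropy μ (fun ω => (X1 ω, X2 ω))
      (fun ω => ((Y12 ω, Y22 ω), X3 ω)) ≤ ε :=
    le_trans (condEntropy_cond_pair_le hnn h1 (fun ω => (X1 ω, X2 ω))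
      (fun ω => (Y12 ω, Y22 ω)) X3) hcond
  have step3 : entropy μ (fun ω => ((X1 ω, X2 ω), X3 ω))
      ≤ entropy μ (fun ω => ((X1 ω, X2 ω), ((Y12 ω, Y22 ω), X3 ω))) :=
    entropy_comp_le hnn
      (fun t : (α₁ × α₂) × ((β₁₂ × β₂₂) × α₃) => (t.1, t.2.2))
      (fun ω => ((X1 ω, X2 ω), ((Y12 ω, Y22 ω), X3 ω)))
  have chain : entropy μ (fun ω => ((X1 ω, X2 ω), ((Y12 ω, Y22 ω), X3 ω)))
      = entropy μ (fun ω => ((Y12 ω, Y22 ω), X3 ω))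
        + condEntropy μ (fun ω => (X1 ω, X2 ω)) (fun ω => ((Y12 ω, Y22 ω), X3 ω)) := by
    simp only [condEntropy]
    ring
  have goal_eq : condEntropy μ (fun ω => (Y11 ω, Y21 ω, Y22 ω)) X3
      = entropy μ (fun ω => ((Y11 ω, Y21 ω, Y22 ω), X3 ω)) - entropy μ X3 := by
    simp only [condEntropy]
  rw [goal_eq]
  rw [hX1] at E12
  rw [hX2] at E12
  rw [hX3] at E123
  linarith
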